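/- Let f(x,y,z) = (x + y·h, y, h) with h = z − 3x⁵y + 2x⁷y², and set F = (f₁, f₂) : ℂ³ → ℂ², F(x,y,z) = (x + y·h(x,y,z), y). Along the path λ(t) = (t, 1/t², 0), as t → ∞ one has ‖λ(t)‖ → ∞, F(λ(t)) converges to a finite limit in ℂ², and ν(Jac(F)(λ(t))) → 0, where ν(A) = inf_{‖φ‖=1} ‖A*(φ)‖. Hence the Rabier set K̃_∞(F) is nonempty. -/

import Mathlib

open Filter

noncomputable def h8 (x y z : ℂ) : ℂ := z - 3 * x ^ 5 * y + 2 * x ^ 7 * y ^ 2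

noncomputable def F8 : ℂ × ℂ × ℂ → ℂ × ℂ :=
  fun p => (p.1 + p.2.1 * h8 p.1 p.2.1 p.2.2, p.2.1)

noncomputable def lam8 (t : ℝ) : ℂ × ℂ × ℂ := ((t : ℂ), 1 / (t : ℂ) ^ 2, 0)

noncomputable def nu8 (A : (ℂ × ℂ × ℂ) →L[ℂ] ℂ × ℂ) : ℝ :=
  sInf {r : ℝ | ∃ φ : (ℂ × ℂ) →L[ℂ] ℂ, ‖φ‖ = 1 ∧ r = ‖φ.comp A‖}

noncomputable def Ktilde8 : Set (ℂ × ℂ) :=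
  {t | ∃ x : ℕ → ℂ × ℂ × ℂ,
    Tendsto (fun j => ‖x j‖) atTop atTop ∧
    Tendsto (fun j => F8 (x j)) atTop (nhds t) ∧
    Tendsto (fun j => nu8 (fderiv ℂ F8 (x j))) atTop (nhds 0)}

noncomputable def Yc8 : (ℂ × ℂ × ℂ) →L[ℂ] ℂ :=
  (ContinuousLinearMap.fst ℂ ℂ ℂ).comp (ContinuousLinearMap.snd ℂ ℂ (ℂ × ℂ))

noncomputable def Zc8 : (ℂ × ℂ × ℂ) →L[ℂ] ℂ :=
  (ContinuousLinearMap.snd ℂ ℂ ℂ).comp (ContinuousLinearMap.snd ℂ ℂ (ℂ × ℂ))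

lemma fderivF8 (t : ℝ) (ht : (t : ℂ) ≠ 0) :
    fderiv ℂ F8 (lam8 t) = ((((t : ℂ) ^ 2)⁻¹ • Zc8).prod Yc8) := by
  have hx : HasFDerivAt (fun p : ℂ × ℂ × ℂ => p.1)
      (ContinuousLinearMap.fst ℂ ℂ (ℂ × ℂ)) (lam8 t) := hasFDerivAt_fst
  have hy : HasFDerivAt (fun p : ℂ × ℂ × ℂ => p.2.1) Yc8 (lam8 t) :=
    HasFDerivAt.fst (hasFDerivAt_snd (p := lam8 t))
  have hz : HasFDerivAt (fun p : ℂ × ℂ × ℂ => p.2.2) Zc8 (lam8 t) :=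
    HasFDerivAt.snd (hasFDerivAt_snd (p := lam8 t))
  have hx5 : HasFDerivAt (fun p : ℂ × ℂ × ℂ => p.1 ^ 5) _ (lam8 t) :=
    (hasDerivAt_pow 5 ((t : ℂ))).comp_hasFDerivAt (h₂ := fun x : ℂ => x ^ 5) (lam8 t) hx
  have hx7 : HasFDerivAt (fun p : ℂ × ℂ × ℂ => p.1 ^ 7) _ (lam8 t) :=
    (hasDerivAt_pow 7 ((t : ℂ))).comp_hasFDerivAt (h₂ := fun x : ℂ => x ^ 7) (lam8 t) hx
  have hy2 : HasFDerivAt (fun p : ℂ × ℂ × ℂ => p.2.1 ^ 2) _ (lam8 t) :=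
    (hasDerivAt_pow 2 (1 / (t : ℂ) ^ 2)).comp_hasFDerivAt (h₂ := fun x : ℂ => x ^ 2) (lam8 t) hy
  have hh := (hz.sub ((hx5.const_mul (3:ℂ)).mul hy)).add
      ((hx7.const_mul (2:ℂ)).mul hy2)
  have hf1 := hx.add (hy.mul hh)
  have hF : HasFDerivAt F8 _ (lam8 t) := HasFDerivAt.prodMk hf1 hy
  rw [hF.fderiv]
  refine ContinuousLinearMap.ext fun v => ?_
  refine Prod.ext ?_ ?_
  · simp only [Yc8, Zc8, ContinuousLinearMap.prod_apply, ContinuousLinearMap.add_apply,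
      ContinuousLinearMap.smul_apply, ContinuousLinearMap.comp_apply,
      ContinuousLinearMap.sub_apply, ContinuousLinearMap.coe_fst',
      ContinuousLinearMap.coe_snd', lam8, smul_eq_mul, Pi.add_apply, Pi.sub_apply, Pi.mul_apply]
    field_simp
    ring_nf
    field_simp
    ring
  · simp [Yc8]

lemma nu8_nonneg (A : (ℂ × ℂ × ℂ) →L[ℂ] ℂ × ℂ) : 0 ≤ nu8 A := by
  apply Real.sInf_nonneg
  rintro r ⟨φ, -, rfl⟩
  exact norm_nonneg _

lemma nu8_le (A : (ℂ × ℂ × ℂ) →L[ℂ] ℂ × ℂ) (φ : (ℂ × ℂ) →L[ℂ] ℂ) (hφ : ‖φ‖ = 1) :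
    nu8 A ≤ ‖φ.comp A‖ := by
  apply csInf_le
  · exact ⟨0, by rintro r ⟨ψ, -, rfl⟩; exact norm_nonneg _⟩
  · exact ⟨φ, hφ, rfl⟩

lemma nu8_bound (t : ℝ) (ht : 1 ≤ t) :
    nu8 (fderiv ℂ F8 (lam8 t)) ≤ (t ^ 2)⁻¹ := by
  have ht0 : (t : ℂ) ≠ 0 := by
    simp only [ne_eq, Complex.ofReal_eq_zero]; linarith
  have h1 : ‖ContinuousLinearMap.fst ℂ ℂ ℂ‖ = 1 := ContinuousLinearMap.norm_fst ℂ ℂ ℂ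
  refine le_trans (nu8_le _ (ContinuousLinearMap.fst ℂ ℂ ℂ) h1) ?_
  rw [fderivF8 t ht0, ContinuousLinearMap.fst_comp_prod]
  have hc : ‖((t : ℂ) ^ 2)⁻¹‖ = (t ^ 2)⁻¹ := by
    rw [norm_inv, norm_pow, Complex.norm_real, Real.norm_eq_abs,
      abs_of_nonneg (by linarith : (0:ℝ) ≤ t)]
  refine ContinuousLinearMap.opNorm_le_bound _ (by positivity) fun v => ?_
  have hv : (((t : ℂ) ^ 2)⁻¹ • Zc8) v = ((t : ℂ) ^ 2)⁻¹ * v.2.2 := by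
    simp [Zc8]
  rw [hv, norm_mul, hc]
  have h22 : ‖v.2.2‖ ≤ ‖v‖ := le_trans (norm_snd_le v.2) (norm_snd_le v)
  gcongr

lemma lam8_norm (t : ℝ) : |t| ≤ ‖lam8 t‖ := by
  have := norm_fst_le (lam8 t)
  simpa [lam8] using this

lemma part1 : Tendsto (fun t : ℝ => ‖lam8 t‖) atTop atTop :=
  tendsto_atTop_mono lam8_norm tendsto_abs_atTop_atTop

lemma F8lam (t : ℝ) (ht : (t : ℂ) ≠ 0) : F8 (lam8 t) = (0, 1 / (t : ℂ) ^ 2) := by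
  simp only [F8, lam8, h8]
  refine Prod.ext ?_ rfl
  field_simp
  ring

lemma inv_sq_tendsto : Tendsto (fun t : ℝ => (t ^ 2)⁻¹) atTop (nhds 0) := by
  apply Tendsto.inv_tendsto_atTop
  exact tendsto_pow_atTop (by norm_num)

lemma part2 : Tendsto (fun t : ℝ => F8 (lam8 t)) atTop (nhds ((0 : ℂ), (0 : ℂ))) := by
  have h2 : Tendsto (fun t : ℝ => 1 / (t : ℂ) ^ 2) atTop (nhds 0) := by
    rw [tendsto_zero_iff_norm_tendsto_zero]
    have : ∀ᶠ t : ℝ in atTop, ‖1 / (t : ℂ) ^ 2‖ = (t ^ 2)⁻¹ := by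
      filter_upwards [eventually_ge_atTop (1 : ℝ)] with t ht
      rw [one_div, norm_inv, norm_pow, Complex.norm_real, Real.norm_eq_abs,
        abs_of_nonneg (by linarith : (0:ℝ) ≤ t)]
    exact Tendsto.congr' (this.mono fun _ h => h.symm) inv_sq_tendsto
  have key : ∀ᶠ t : ℝ in atTop, ((0 : ℂ), 1 / (t : ℂ) ^ 2) = F8 (lam8 t) := by
    filter_upwards [eventually_ge_atTop (1 : ℝ)] with t ht
    rw [F8lam t (by simp only [ne_eq, Complex.ofReal_eq_zero]; linarith)]
  exact Tendsto.congr' key (tendsto_const_nhds.prodMk_nhds h2)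

lemma part3 : Tendsto (fun t : ℝ => nu8 (fderiv ℂ F8 (lam8 t))) atTop (nhds 0) := by
  refine tendsto_of_tendsto_of_tendsto_of_le_of_le' tendsto_const_nhds inv_sq_tendsto ?_ ?_
  · exact Eventually.of_forall fun t => nu8_nonneg _
  · filter_upwards [eventually_ge_atTop (1 : ℝ)] with t ht
    exact nu8_bound t ht

theorem stmt8 :
    Tendsto (fun t : ℝ => ‖lam8 t‖) atTop atTop ∧
    (∃ L : ℂ × ℂ, Tendsto (fun t : ℝ => F8 (lam8 t)) atTop (nhds L)) ∧
    Tendsto (fun t : ℝ => nu8 (fderiv ℂ F8 (lam8 t))) atTop (nhds 0) ∧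
    Ktilde8.Nonempty := by
  refine ⟨part1, ⟨_, part2⟩, part3, ⟨((0 : ℂ), (0 : ℂ)), ?_⟩⟩
  refine ⟨fun j => lam8 j, ?_, ?_, ?_⟩
  · exact part1.comp tendsto_natCast_atTop_atTop
  · exact part2.comp tendsto_natCast_atTop_atTop
  · exact part3.comp tendsto_natCast_atTop_atTop
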